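/- Let n ≥ 1 and let ν be a real number with ν > −n, and let e₁ ∈ ℝⁿ be the first standard basis vector. Then there exist constants c₁, c₂ > 0, depending only on n and ν, such that the integral I(t) = ∫_{B(0,t)} |y − e₁|^{ν} dy satisfies: c₁ t^{n} ≤ I(t) ≤ c₂ t^{n} for all 0 < t ≤ 1, and c₁ t^{n+ν} ≤ I(t) ≤ c₂ t^{n+ν} for all t ≥ 1. -/

import Mathlib

open MeasureTheory Metric Set
open scoped ENNReal NNReal

section aux
variable {E : Type*} [NormedAddCommGroup E] [NormedSpace ℝ E] [MeasurableSpace E]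
  [BorelSpace E] [FiniteDimensional ℝ E] (μ : Measure E) [μ.IsAddHaarMeasure]

lemma aux_meas (ν : ℝ) (e : E) :
    Measurable (fun y : E => ENNReal.ofReal (‖y - e‖ ^ ν)) := by fun_prop

lemma aux_translate (ν R : ℝ) (e : E) :
    ∫⁻ y in ball e R, ENNReal.ofReal (‖y - e‖ ^ ν) ∂μ
      = ∫⁻ z in ball (0 : E) R, ENNReal.ofReal (‖z‖ ^ ν) ∂μ := by
  have hmp : MeasurePreserving (fun z : E => z + e) μ μ := measurePreserving_add_right μ e
  have h := hmp.setLIntegral_comp_preimage (measurableSet_ball (x := e) (ε := R))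
    (aux_meas ν e)
  rw [← h]
  have hpre : (fun z : E => z + e) ⁻¹' ball e R = ball (0 : E) R := by
    ext z
    simp [mem_ball, dist_eq_norm]
  rw [hpre]
  refine setLIntegral_congr_fun measurableSet_ball (fun z _ => ?_)
  simp

lemma aux_scale (ν : ℝ) {R : ℝ} (hR : 0 < R) :
    ∫⁻ z in ball (0 : E) R, ENNReal.ofReal (‖z‖ ^ ν) ∂μ
      = ENNReal.ofReal (R ^ ((Module.finrank ℝ E : ℝ) + ν)) *
        ∫⁻ z in ball (0 : E) 1, ENNReal.ofReal (‖z‖ ^ ν) ∂μ := by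
  set d := Module.finrank ℝ E
  have hRd : (0:ℝ) < R ^ d := pow_pos hR d
  have hf : Measurable (fun z : E => ENNReal.ofReal (‖z‖ ^ ν)) := by fun_prop
  have hg : Measurable (fun x : E => R • x) := measurable_id.const_smul R
  have hmap := Measure.map_addHaar_smul μ (r := R) hR.ne'
  have hpre : (fun x : E => R • x) ⁻¹' (ball (0:E) R) = ball (0:E) 1 := by
    ext x
    simp only [mem_preimage, mem_ball_zero_iff, norm_smul, Real.norm_eq_abs,
      abs_of_pos hR]
    constructor <;> intro h <;> nlinarith
  have key : ∫⁻ y in ball (0:E) R, ENNReal.ofReal (‖y‖ ^ ν) ∂(Measure.map (fun x : E => R • x) μ)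
      = ∫⁻ x in ball (0:E) 1, ENNReal.ofReal (‖R • x‖ ^ ν) ∂μ := by
    rw [setLIntegral_map measurableSet_ball hf hg, hpre]
  rw [hmap] at key
  rw [Measure.restrict_smul, lintegral_smul_measure] at key
  have hRinv : ENNReal.ofReal |(R ^ d)⁻¹| = ENNReal.ofReal ((R ^ d)⁻¹) := by
    rw [abs_of_pos (by positivity)]
  rw [hRinv, smul_eq_mul] at key
  have hmain : ∫⁻ z in ball (0 : E) R, ENNReal.ofReal (‖z‖ ^ ν) ∂μ
      = ENNReal.ofReal (R ^ d) * ∫⁻ x in ball (0:E) 1, ENNReal.ofReal (‖R • x‖ ^ ν) ∂μ := by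
    rw [← key, ← mul_assoc, ← ENNReal.ofReal_mul hRd.le, mul_inv_cancel₀ hRd.ne',
      ENNReal.ofReal_one, one_mul]
  rw [hmain]
  have hint : ∫⁻ x in ball (0:E) 1, ENNReal.ofReal (‖R • x‖ ^ ν) ∂μ
      = ENNReal.ofReal (R ^ ν) * ∫⁻ x in ball (0:E) 1, ENNReal.ofReal (‖x‖ ^ ν) ∂μ := by
    rw [← lintegral_const_mul _ hf]
    refine setLIntegral_congr_fun measurableSet_ball (fun x _ => ?_)
    rw [norm_smul, Real.norm_eq_abs, abs_of_pos hR, Real.mul_rpow hR.le (norm_nonneg x),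
      ENNReal.ofReal_mul (Real.rpow_nonneg hR.le ν)]
  rw [hint, ← mul_assoc]
  congr 1
  rw [Real.rpow_add hR, Real.rpow_natCast, ENNReal.ofReal_mul hRd.le]

lemma aux_finite {ν : ℝ} (hν : -(Module.finrank ℝ E : ℝ) < ν) :
    ∫⁻ z in ball (0 : E) 1, ENNReal.ofReal (‖z‖ ^ ν) ∂μ < ⊤ := by
  set d := Module.finrank ℝ E
  rcases le_or_gt 0 ν with h0 | h0
  · calc ∫⁻ z in ball (0:E) 1, ENNReal.ofReal (‖z‖ ^ ν) ∂μ
        ≤ ∫⁻ x in ball (0:E) 1, (1 : ℝ≥0∞) ∂μ := by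
          refine setLIntegral_mono' measurableSet_ball fun z hz => ?_
          rw [mem_ball_zero_iff] at hz
          calc ENNReal.ofReal (‖z‖ ^ ν) ≤ ENNReal.ofReal 1 :=
                ENNReal.ofReal_le_ofReal
                  (Real.rpow_le_one (norm_nonneg _) hz.le h0)
            _ = 1 := ENNReal.ofReal_one
      _ = μ (ball (0:E) 1) := by rw [setLIntegral_const, one_mul]
      _ < ⊤ := measure_ball_lt_top
  · have hν0 : ν ≠ 0 := h0.ne
    have hmeas : Measurable (fun z : E => ‖z‖ ^ ν) := by fun_prop
    have layer := lintegral_eq_lintegral_meas_le (μ.restrict (ball (0:E) 1))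
      (f := fun z : E => ‖z‖ ^ ν)
      (Filter.Eventually.of_forall fun z => Real.rpow_nonneg (norm_nonneg _) _)
      hmeas.aemeasurable
    rw [layer]
    have hset : ∀ t : ℝ, 0 < t → {a : E | t ≤ ‖a‖ ^ ν} ⊆ closedBall (0:E) (t ^ ν⁻¹) := by
      intro t ht a ha
      simp only [mem_setOf_eq] at ha
      have ha0 : a ≠ 0 := by
        rintro rfl
        rw [norm_zero, Real.zero_rpow hν0] at ha
        linarith
      have hna : 0 < ‖a‖ := norm_pos_iff.2 ha0
      rw [mem_closedBall_zero_iff]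
      exact (Real.le_rpow_inv_iff_of_neg hna ht h0).2 ha
    set f := fun t : ℝ => (μ.restrict (ball (0:E) 1)) {a : E | t ≤ ‖a‖ ^ ν} with hf
    calc ∫⁻ t in Ioi (0:ℝ), f t
        ≤ ∫⁻ t in Ioc (0:ℝ) 1 ∪ Ioi 1, f t := lintegral_mono_set Ioi_subset_Ioc_union_Ioi
      _ ≤ (∫⁻ t in Ioc (0:ℝ) 1, f t) + ∫⁻ t in Ioi (1:ℝ), f t := lintegral_union_le _ _ _
      _ < ⊤ := by
        refine ENNReal.add_lt_top.2 ⟨?_, ?_⟩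
        · have hb : ∀ t : ℝ, f t ≤ μ (ball (0:E) 1) := by
            intro t
            show (μ.restrict (ball (0:E) 1)) {a : E | t ≤ ‖a‖ ^ ν} ≤ _
            rw [Measure.restrict_apply' measurableSet_ball]
            exact measure_mono inter_subset_right
          calc ∫⁻ t in Ioc (0:ℝ) 1, f t
              ≤ ∫⁻ x in Ioc (0:ℝ) 1, μ (ball (0:E) 1) :=
                lintegral_mono fun t => hb t
            _ = μ (ball (0:E) 1) * volume (Ioc (0:ℝ) 1) := setLIntegral_const _ _
            _ < ⊤ := ENNReal.mul_lt_top measure_ball_lt_top (by simp)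
        · have hlt : ν⁻¹ * (d : ℝ) < -1 := by
            have h1 : ν⁻¹ * ν < ν⁻¹ * (-(d:ℝ)) :=
              mul_lt_mul_of_neg_left hν (inv_lt_zero.mpr h0)
            rw [inv_mul_cancel₀ hν0] at h1
            linarith
          have hbound : ∀ t ∈ Ioi (1:ℝ), f t ≤ ENNReal.ofReal (t ^ (ν⁻¹ * (d:ℝ))) * μ (ball (0:E) 1) := by
            intro t ht
            have ht0 : (0:ℝ) < t := lt_trans one_pos ht
            calc f t ≤ μ {a : E | t ≤ ‖a‖ ^ ν} := Measure.restrict_le_self _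
              _ ≤ μ (closedBall (0:E) (t ^ ν⁻¹)) := measure_mono (hset t ht0)
              _ = ENNReal.ofReal ((t ^ ν⁻¹) ^ d) * μ (ball (0:E) 1) :=
                  μ.addHaar_closedBall 0 (Real.rpow_nonneg ht0.le _)
              _ = ENNReal.ofReal (t ^ (ν⁻¹ * (d:ℝ))) * μ (ball (0:E) 1) := by
                  rw [Real.rpow_mul ht0.le, Real.rpow_natCast]
          calc ∫⁻ t in Ioi (1:ℝ), f t
              ≤ ∫⁻ t in Ioi (1:ℝ), ENNReal.ofReal (t ^ (ν⁻¹ * (d:ℝ))) * μ (ball (0:E) 1) :=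
                setLIntegral_mono' measurableSet_Ioi hbound
            _ = (∫⁻ t in Ioi (1:ℝ), ENNReal.ofReal (t ^ (ν⁻¹ * (d:ℝ)))) * μ (ball (0:E) 1) :=
                lintegral_mul_const' _ _ measure_ball_lt_top.ne
            _ < ⊤ := ENNReal.mul_lt_top
                ((integrableOn_Ioi_rpow_of_lt hlt one_pos).setLIntegral_lt_top)
                measure_ball_lt_top

end aux

section main
set_option maxHeartbeats 1000000 in

theorem main_aux {E : Type*} [NormedAddCommGroup E] [NormedSpace ℝ E]
    [MeasureSpace E] [BorelSpace E] [FiniteDimensional ℝ E]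
    [(volume : Measure E).IsAddHaarMeasure]
    (n : ℕ) (ν : ℝ) (hν : -(n : ℝ) < ν) (hd : Module.finrank ℝ E = n)
    (e : E) (he : ‖e‖ = 1) :
    ∃ c₁ c₂ : ℝ, 0 < c₁ ∧ 0 < c₂ ∧
      (∀ t : ℝ, 0 < t → t ≤ 1 →
        ENNReal.ofReal (c₁ * t ^ (n : ℝ)) ≤
          (∫⁻ y in Metric.ball (0 : E) t,
            ENNReal.ofReal (‖y - e‖ ^ ν)) ∧
        (∫⁻ y in Metric.ball (0 : E) t,
            ENNReal.ofReal (‖y - e‖ ^ ν)) ≤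
          ENNReal.ofReal (c₂ * t ^ (n : ℝ))) ∧
      (∀ t : ℝ, 1 ≤ t →
        ENNReal.ofReal (c₁ * t ^ ((n : ℝ) + ν)) ≤
          (∫⁻ y in Metric.ball (0 : E) t,
            ENNReal.ofReal (‖y - e‖ ^ ν)) ∧
        (∫⁻ y in Metric.ball (0 : E) t,
            ENNReal.ofReal (‖y - e‖ ^ ν)) ≤
          ENNReal.ofReal (c₂ * t ^ ((n : ℝ) + ν))) := by
  have he0 : e ≠ 0 := by
    intro h; rw [h, norm_zero] at he; norm_num at he
  haveI : Nontrivial E := nontrivial_of_ne e 0 he0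
  -- basic constants
  set V : ℝ≥0∞ := volume (ball (0 : E) 1) with hVdef
  have hV0 : V ≠ 0 := (measure_ball_pos volume 0 one_pos).ne'
  have hVfin : V ≠ ⊤ := measure_ball_lt_top.ne
  set v : ℝ := V.toReal with hvdef
  have hv : 0 < v := ENNReal.toReal_pos hV0 hVfin
  have hVor : V = ENNReal.ofReal v := (ENNReal.ofReal_toReal hVfin).symm
  set S : ℝ≥0∞ := ∫⁻ z in ball (0 : E) 1, ENNReal.ofReal (‖z‖ ^ ν) with hSdef
  have hSfin : S ≠ ⊤ := by
    have := aux_finite (μ := (volume : Measure E)) (ν := ν) (by rw [hd]; exact hν)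
    exact this.ne
  set s : ℝ := S.toReal with hsdef
  have hs : 0 ≤ s := ENNReal.toReal_nonneg
  have hSor : S = ENNReal.ofReal s := (ENNReal.ofReal_toReal hSfin).symm
  -- ball measure formula
  have hball : ∀ (x : E) {r : ℝ}, 0 ≤ r →
      volume (ball x r) = ENNReal.ofReal (r ^ n) * V := by
    intro x r hr
    rw [Measure.addHaar_ball volume x hr, hd]
  -- translated/scaled integral
  have hball_e : ∀ {R : ℝ}, 0 < R →
      (∫⁻ y in ball e R, ENNReal.ofReal (‖y - e‖ ^ ν))
        = ENNReal.ofReal (R ^ ((n : ℝ) + ν) * s) := by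
    intro R hR
    rw [aux_translate volume ν R e, aux_scale volume ν hR, hd, ← hSdef, hSor,
      ← ENNReal.ofReal_mul (Real.rpow_nonneg hR.le _)]
  -- pointwise rpow bounds
  have hmin : ∀ {a b x : ℝ}, 0 < a → a ≤ x → x ≤ b → min (a ^ ν) (b ^ ν) ≤ x ^ ν := by
    intro a b x ha hax hxb
    rcases le_or_gt 0 ν with h | h
    · exact le_trans (min_le_left _ _) (Real.rpow_le_rpow ha.le hax h)
    · exact le_trans (min_le_right _ _)
        (Real.rpow_le_rpow_of_nonpos (ha.trans_le hax) hxb h.le)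
  have hmax : ∀ {a b x : ℝ}, 0 < a → a ≤ x → x ≤ b → x ^ ν ≤ max (a ^ ν) (b ^ ν) := by
    intro a b x ha hax hxb
    rcases le_or_gt 0 ν with h | h
    · exact le_trans (Real.rpow_le_rpow (ha.le.trans hax) hxb h) (le_max_right _ _)
    · exact le_trans (Real.rpow_le_rpow_of_nonpos ha hax h.le) (le_max_left _ _)
  -- generic upper/lower bounds
  have hupper : ∀ (t M : ℝ), 0 ≤ t → 0 ≤ M →
      (∀ y ∈ ball (0 : E) t, ‖y - e‖ ^ ν ≤ M) →
      (∫⁻ y in ball (0 : E) t, ENNReal.ofReal (‖y - e‖ ^ ν))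
        ≤ ENNReal.ofReal (M * t ^ (n : ℝ)) * V := by
    intro t M ht hM h
    calc (∫⁻ y in ball (0 : E) t, ENNReal.ofReal (‖y - e‖ ^ ν))
        ≤ ∫⁻ x in ball (0 : E) t, ENNReal.ofReal M :=
          setLIntegral_mono' measurableSet_ball
            (fun y hy => ENNReal.ofReal_le_ofReal (h y hy))
      _ = ENNReal.ofReal M * volume (ball (0 : E) t) := setLIntegral_const _ _
      _ = ENNReal.ofReal (M * t ^ (n : ℝ)) * V := by
          rw [Real.rpow_natCast, hball 0 ht, ← mul_assoc, ← ENNReal.ofReal_mul hM]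
  have hlower : ∀ (t m r : ℝ) (c : E), 0 ≤ r → 0 ≤ m → ball c r ⊆ ball (0 : E) t →
      (∀ y ∈ ball c r, m ≤ ‖y - e‖ ^ ν) →
      ENNReal.ofReal (m * r ^ (n : ℝ)) * V
        ≤ ∫⁻ y in ball (0 : E) t, ENNReal.ofReal (‖y - e‖ ^ ν) := by
    intro t m r c hr hm hsub h
    calc ENNReal.ofReal (m * r ^ (n : ℝ)) * V
        = ENNReal.ofReal m * volume (ball c r) := by
          rw [Real.rpow_natCast, hball c hr, ← mul_assoc, ← ENNReal.ofReal_mul hm]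
      _ = ∫⁻ x in ball c r, ENNReal.ofReal m := (setLIntegral_const _ _).symm
      _ ≤ ∫⁻ y in ball c r, ENNReal.ofReal (‖y - e‖ ^ ν) :=
          setLIntegral_mono' measurableSet_ball
            (fun y hy => ENNReal.ofReal_le_ofReal (h y hy))
      _ ≤ _ := lintegral_mono_set hsub
  -- constants
  set m₀ : ℝ := min ((2 : ℝ)⁻¹ ^ ν) ((2 : ℝ) ^ ν) with hm₀def
  set m₁ : ℝ := min ((4 : ℝ)⁻¹ ^ ν) ((2 : ℝ) ^ ν) with hm₁def
  set M₀ : ℝ := max ((2 : ℝ)⁻¹ ^ ν) ((2 : ℝ) ^ ν) with hM₀def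
  have hm₀ : 0 < m₀ := lt_min (Real.rpow_pos_of_pos (by norm_num) _)
    (Real.rpow_pos_of_pos (by norm_num) _)
  have hm₁ : 0 < m₁ := lt_min (Real.rpow_pos_of_pos (by norm_num) _)
    (Real.rpow_pos_of_pos (by norm_num) _)
  have hM₀ : 0 < M₀ := (Real.rpow_pos_of_pos (by norm_num) ν).trans_le (le_max_left _ _)
  set c₁ : ℝ := min (m₀ * (2 : ℝ)⁻¹ ^ (n : ℝ) * v) (m₁ * (4 : ℝ)⁻¹ ^ (n : ℝ) * v) with hc₁def
  have hc₁ : 0 < c₁ := lt_min (by positivity) (by positivity)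
  set A : ℝ := M₀ * v with hAdef
  set B : ℝ := 2 ^ ((n : ℝ) + ν) * s * 2 ^ (n : ℝ) with hBdef
  set D : ℝ := 2 ^ ((n : ℝ) + ν) * s with hDdef
  set c₂ : ℝ := max (max A B) D with hc₂def
  have hA : 0 < A := by positivity
  have hB : 0 ≤ B := by positivity
  have hD : 0 ≤ D := by positivity
  have hc₂ : 0 < c₂ := lt_of_lt_of_le hA ((le_max_left _ _).trans (le_max_left _ _))
  have hAc₂ : A ≤ c₂ := (le_max_left _ _).trans (le_max_left _ _)
  have hBc₂ : B ≤ c₂ := (le_max_right _ _).trans (le_max_left _ _)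
  have hDc₂ : D ≤ c₂ := le_max_right _ _
  refine ⟨c₁, c₂, hc₁, hc₂, ?_, ?_⟩
  · -- regime 0 < t ≤ 1
    intro t ht ht1
    have htn : (0:ℝ) ≤ t ^ (n : ℝ) := Real.rpow_nonneg ht.le _
    constructor
    · -- lower bound
      have hsub : ball (0 : E) (t / 2) ⊆ ball (0 : E) t :=
        ball_subset_ball (by linarith)
      have hpoint : ∀ y ∈ ball (0 : E) (t / 2), m₀ ≤ ‖y - e‖ ^ ν := by
        intro y hy
        rw [mem_ball_zero_iff] at hy
        have h1 : (2 : ℝ)⁻¹ ≤ ‖y - e‖ := by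
          have hh : ‖e‖ - ‖y‖ ≤ ‖e - y‖ := norm_sub_norm_le e y
          rw [norm_sub_rev] at hh
          rw [he] at hh
          linarith
        have h2 : ‖y - e‖ ≤ 2 := by
          have hh : ‖y - e‖ ≤ ‖y‖ + ‖e‖ := norm_sub_le _ _
          rw [he] at hh
          linarith
        exact hmin (by norm_num) h1 h2
      refine le_trans ?_ (hlower t m₀ (t / 2) 0 (by linarith) hm₀.le hsub hpoint)
      rw [hVor, ← ENNReal.ofReal_mul (by positivity)]
      apply ENNReal.ofReal_le_ofReal
      have hpow : (t / 2) ^ (n : ℝ) = t ^ (n : ℝ) * (2 : ℝ)⁻¹ ^ (n : ℝ) := by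
        rw [div_eq_mul_inv, Real.mul_rpow ht.le (by norm_num)]
      rw [hpow]
      have hkey := mul_le_mul_of_nonneg_right (min_le_left
        (m₀ * (2 : ℝ)⁻¹ ^ (n : ℝ) * v) (m₁ * (4 : ℝ)⁻¹ ^ (n : ℝ) * v)) htn
      rw [← hc₁def] at hkey
      nlinarith [hkey]
    · -- upper bound
      rcases le_or_gt t 2⁻¹ with hhalf | hhalf
      · -- small t : pointwise bound
        have hpoint : ∀ y ∈ ball (0 : E) t, ‖y - e‖ ^ ν ≤ M₀ := by
          intro y hy
          rw [mem_ball_zero_iff] at hy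
          have h1 : (2 : ℝ)⁻¹ ≤ ‖y - e‖ := by
            have hh : ‖e‖ - ‖y‖ ≤ ‖e - y‖ := norm_sub_norm_le e y
            rw [norm_sub_rev] at hh
            rw [he] at hh
            linarith
          have h2 : ‖y - e‖ ≤ 2 := by
            have hh : ‖y - e‖ ≤ ‖y‖ + ‖e‖ := norm_sub_le _ _
            rw [he] at hh
            linarith
          exact hmax (by norm_num) h1 h2
        refine le_trans (hupper t M₀ ht.le hM₀.le hpoint) ?_
        rw [hVor, ← ENNReal.ofReal_mul (by positivity)]
        apply ENNReal.ofReal_le_ofReal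
        have hkey := mul_le_mul_of_nonneg_right hAc₂ htn
        nlinarith [hkey]
      · -- 1/2 < t ≤ 1 : compare with integral over ball e 2
        have hsub : ball (0 : E) t ⊆ ball e 2 := by
          intro y hy
          rw [mem_ball_zero_iff] at hy
          rw [mem_ball_iff_norm]
          have hh : ‖y - e‖ ≤ ‖y‖ + ‖e‖ := norm_sub_le _ _
          rw [he] at hh
          linarith
        calc (∫⁻ y in ball (0 : E) t, ENNReal.ofReal (‖y - e‖ ^ ν))
            ≤ ∫⁻ y in ball e 2, ENNReal.ofReal (‖y - e‖ ^ ν) := lintegral_mono_set hsub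
          _ = ENNReal.ofReal ((2 : ℝ) ^ ((n : ℝ) + ν) * s) := hball_e (by norm_num)
          _ ≤ ENNReal.ofReal (c₂ * t ^ (n : ℝ)) := by
              apply ENNReal.ofReal_le_ofReal
              have ht' : (2 : ℝ)⁻¹ ^ (n : ℝ) ≤ t ^ (n : ℝ) :=
                Real.rpow_le_rpow (by norm_num) hhalf.le (by positivity)
              have h2n : (2 : ℝ) ^ (n : ℝ) * (2 : ℝ)⁻¹ ^ (n : ℝ) = 1 := by
                rw [← Real.mul_rpow (by norm_num) (by norm_num)]
                norm_num
              have hkey := mul_le_mul_of_nonneg_right hBc₂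
                ((Real.rpow_nonneg (by norm_num : (0:ℝ) ≤ 2⁻¹) (n : ℝ)))
              -- B * 2⁻¹^n ≤ c₂ * 2⁻¹^n ≤ c₂ * t^n and B * 2⁻¹^n = 2^(n+ν) * s
              have hB2 : B * (2 : ℝ)⁻¹ ^ (n : ℝ) = 2 ^ ((n : ℝ) + ν) * s := by
                rw [hBdef]; nlinarith [h2n]
              have hc₂t : c₂ * (2 : ℝ)⁻¹ ^ (n : ℝ) ≤ c₂ * t ^ (n : ℝ) :=
                mul_le_mul_of_nonneg_left ht' hc₂.le
              linarith
  · -- regime t ≥ 1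
    intro t ht
    have ht0 : (0:ℝ) < t := lt_of_lt_of_le one_pos ht
    have htν : (0:ℝ) ≤ t ^ ν := Real.rpow_nonneg ht0.le _
    have htn : (0:ℝ) ≤ t ^ (n : ℝ) := Real.rpow_nonneg ht0.le _
    have htnν : (0:ℝ) ≤ t ^ ((n : ℝ) + ν) := Real.rpow_nonneg ht0.le _
    have htadd : t ^ ((n : ℝ) + ν) = t ^ (n : ℝ) * t ^ ν := Real.rpow_add ht0 _ _
    constructor
    · -- lower bound
      set c : E := (-(t / 2)) • e with hcdef
      have hcn : ‖c‖ = t / 2 := by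
        rw [hcdef, norm_smul, Real.norm_eq_abs, he, abs_neg, abs_of_pos (by linarith), mul_one]
      have hce : ‖c - e‖ = t / 2 + 1 := by
        have hrw : c - e = (-(t / 2) - 1) • e := by
          rw [sub_smul, one_smul, hcdef]
        rw [hrw, norm_smul, Real.norm_eq_abs, he, mul_one,
          show -(t / 2) - 1 = -(t / 2 + 1) by ring, abs_neg, abs_of_pos (by linarith)]
      have hsub : ball c (t / 4) ⊆ ball (0 : E) t := by
        intro y hy
        rw [mem_ball_iff_norm] at hy
        rw [mem_ball_zero_iff]
        have hh : ‖y‖ ≤ ‖y - c‖ + ‖c‖ := by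
          simpa using norm_add_le (y - c) c
        linarith
      have hpoint : ∀ y ∈ ball c (t / 4), m₁ * t ^ ν ≤ ‖y - e‖ ^ ν := by
        intro y hy
        rw [mem_ball_iff_norm] at hy
        have htri : ‖c - e‖ ≤ ‖c - y‖ + ‖y - e‖ := by
          have := dist_triangle c y e
          simpa [dist_eq_norm] using this
        have hcy : ‖c - y‖ = ‖y - c‖ := norm_sub_rev _ _
        have h1 : t / 4 ≤ ‖y - e‖ := by
          rw [hcy, hce] at htri
          linarith
        have h2 : ‖y - e‖ ≤ 2 * t := by
          have htri2 : ‖y - e‖ ≤ ‖y - c‖ + ‖c - e‖ := by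
            have := dist_triangle y c e
            simpa [dist_eq_norm] using this
          rw [hce] at htri2
          linarith
        have hm := hmin (a := t / 4) (b := 2 * t) (by linarith) h1 h2
        refine le_trans ?_ hm
        have ha : (t / 4 : ℝ) ^ ν = t ^ ν * (4 : ℝ)⁻¹ ^ ν := by
          rw [div_eq_mul_inv, Real.mul_rpow ht0.le (by norm_num)]
        have hb : ((2 : ℝ) * t) ^ ν = (2 : ℝ) ^ ν * t ^ ν := by
          rw [Real.mul_rpow (by norm_num) ht0.le]
        rw [ha, hb]
        refine le_min ?_ ?_
        · nlinarith [min_le_left ((4 : ℝ)⁻¹ ^ ν) ((2 : ℝ) ^ ν), htν]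
        · nlinarith [min_le_right ((4 : ℝ)⁻¹ ^ ν) ((2 : ℝ) ^ ν), htν]
      refine le_trans ?_ (hlower t (m₁ * t ^ ν) (t / 4) c (by linarith)
        (by positivity) hsub hpoint)
      rw [hVor, ← ENNReal.ofReal_mul (by positivity)]
      apply ENNReal.ofReal_le_ofReal
      have hpow : (t / 4) ^ (n : ℝ) = t ^ (n : ℝ) * (4 : ℝ)⁻¹ ^ (n : ℝ) := by
        rw [div_eq_mul_inv, Real.mul_rpow ht0.le (by norm_num)]
      rw [hpow, htadd]
      have hkey := mul_le_mul_of_nonneg_right (min_le_right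
        (m₀ * (2 : ℝ)⁻¹ ^ (n : ℝ) * v) (m₁ * (4 : ℝ)⁻¹ ^ (n : ℝ) * v))
        (mul_nonneg htn htν)
      rw [← hc₁def] at hkey
      nlinarith [hkey]
    · -- upper bound
      have hsub : ball (0 : E) t ⊆ ball e (2 * t) := by
        intro y hy
        rw [mem_ball_zero_iff] at hy
        rw [mem_ball_iff_norm]
        have hh : ‖y - e‖ ≤ ‖y‖ + ‖e‖ := norm_sub_le _ _
        rw [he] at hh
        linarith
      calc (∫⁻ y in ball (0 : E) t, ENNReal.ofReal (‖y - e‖ ^ ν))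
          ≤ ∫⁻ y in ball e (2 * t), ENNReal.ofReal (‖y - e‖ ^ ν) := lintegral_mono_set hsub
        _ = ENNReal.ofReal (((2 : ℝ) * t) ^ ((n : ℝ) + ν) * s) := hball_e (by linarith)
        _ ≤ ENNReal.ofReal (c₂ * t ^ ((n : ℝ) + ν)) := by
            apply ENNReal.ofReal_le_ofReal
            have hmul : ((2 : ℝ) * t) ^ ((n : ℝ) + ν)
                = (2 : ℝ) ^ ((n : ℝ) + ν) * t ^ ((n : ℝ) + ν) := by
              rw [Real.mul_rpow (by norm_num) ht0.le]
            rw [hmul]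
            have hkey := mul_le_mul_of_nonneg_right hDc₂ htnν
            nlinarith [hkey]

end main



open MeasureTheory

/-- Two-sided estimate for `I(t) = ∫_{B(0,t)} |y - e₁|^ν dy` when `ν > -n`:
`I(t) ≍ tⁿ` for `0 < t ≤ 1` and `I(t) ≍ t^{n+ν}` for `t ≥ 1`,
with constants depending only on `n` and `ν`. -/
theorem stmt9 (n : ℕ) (hn : 1 ≤ n) (ν : ℝ) (hν : -(n : ℝ) < ν) :
    ∃ c₁ c₂ : ℝ, 0 < c₁ ∧ 0 < c₂ ∧
      (∀ t : ℝ, 0 < t → t ≤ 1 →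
        ENNReal.ofReal (c₁ * t ^ (n : ℝ)) ≤
          (∫⁻ y in Metric.ball (0 : EuclideanSpace ℝ (Fin n)) t,
            ENNReal.ofReal (‖y - EuclideanSpace.single (⟨0, hn⟩ : Fin n) (1 : ℝ)‖ ^ ν)) ∧
        (∫⁻ y in Metric.ball (0 : EuclideanSpace ℝ (Fin n)) t,
            ENNReal.ofReal (‖y - EuclideanSpace.single (⟨0, hn⟩ : Fin n) (1 : ℝ)‖ ^ ν)) ≤
          ENNReal.ofReal (c₂ * t ^ (n : ℝ))) ∧
      (∀ t : ℝ, 1 ≤ t →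
        ENNReal.ofReal (c₁ * t ^ ((n : ℝ) + ν)) ≤
          (∫⁻ y in Metric.ball (0 : EuclideanSpace ℝ (Fin n)) t,
            ENNReal.ofReal (‖y - EuclideanSpace.single (⟨0, hn⟩ : Fin n) (1 : ℝ)‖ ^ ν)) ∧
        (∫⁻ y in Metric.ball (0 : EuclideanSpace ℝ (Fin n)) t,
            ENNReal.ofReal (‖y - EuclideanSpace.single (⟨0, hn⟩ : Fin n) (1 : ℝ)‖ ^ ν)) ≤
          ENNReal.ofReal (c₂ * t ^ ((n : ℝ) + ν))) :=
  main_aux n ν hν finrank_euclideanSpace_fin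
    (EuclideanSpace.single (⟨0, hn⟩ : Fin n) (1 : ℝ))
    (by rw [EuclideanSpace.norm_single]; norm_num)
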